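/- For any pair of integers (m, k) and any M > 0, there exist integers r(G₁) = m and r(G₂) = k realized as turning numbers of axis-parallel polygonal loops G₁, G₂ of equal grid size n, each satisfying the zero-area condition Σᵢ σᵢ·yᵢ·ℓᵢ = 0. -/
import Mathlib


/-- An axis-parallel polygonal grid-diagram loop of grid size `n` in `[0, n]²`: the corners
`c j` (indexed cyclically by `ℤ`, with period `2n`) alternate between horizontal edges
(even `j`) and vertical edges (odd `j`); the `n` horizontal segments lie at distinct
half-integer heights `k + 1/2` with `0 ≤ k < n` (one per row) and the `n` vertical
segments at distinct half-integer positions (one per column). -/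
structure GridLoop (n : ℕ) where
  c : ℤ → ℚ × ℚ
  hn : 0 < n
  periodic : ∀ j, c (j + 2 * n) = c j
  horiz : ∀ j, Even j → (c (j + 1)).2 = (c j).2
  vert : ∀ j, Odd j → (c (j + 1)).1 = (c j).1
  corner : ∀ j, c (j + 1) ≠ c j
  rowHeights : ∀ i : ℤ, 0 ≤ i → i < n → ∃ k : ℕ, k < n ∧ (c (2 * i)).2 = (k : ℚ) + 1 / 2
  colPositions : ∀ i : ℤ, 0 ≤ i → i < n →
    ∃ k : ℕ, k < n ∧ (c (2 * i + 1)).1 = (k : ℚ) + 1 / 2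
  rowsInj : ∀ i i' : ℤ, 0 ≤ i → i < n → 0 ≤ i' → i' < n →
    (c (2 * i)).2 = (c (2 * i')).2 → i = i'
  colsInj : ∀ i i' : ℤ, 0 ≤ i → i < n → 0 ≤ i' → i' < n →
    (c (2 * i + 1)).1 = (c (2 * i' + 1)).1 → i = i'

/-- The turning sign `η` of a corner with incoming edge direction `u` and outgoing edge
direction `v`: `+1` for a counterclockwise corner, `−1` for a clockwise one. -/
def turnSign (u v : ℚ × ℚ) : ℚ :=
  if 0 < u.1 * v.2 - u.2 * v.1 then 1 else -1

/-- The turning number `(1/4)·(#ccw corners − #cw corners)` of a grid loop. -/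
def turningNumber {n : ℕ} (G : GridLoop n) : ℚ :=
  (1 / 4) * ∑ j ∈ Finset.range (2 * n),
    turnSign (G.c (j + 1) - G.c j) (G.c (j + 2) - G.c (j + 1))

/-- The signed area sum `Σᵢ σᵢ·yᵢ·ℓᵢ` of a grid loop, where for the horizontal segment in
row `i`, `yᵢ` is its height and `σᵢ·ℓᵢ` its signed horizontal displacement. -/
def signedArea {n : ℕ} (G : GridLoop n) : ℚ :=
  ∑ i ∈ Finset.range n, (G.c (2 * i)).2 * ((G.c (2 * i + 1)).1 - (G.c (2 * i)).1)

namespace TNaux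

/-- periodized lookup -/
def Fp (N : ℕ) (f : ℤ → ℤ) (i : ℤ) : ℤ := f (i % (N : ℤ))

def Good (N : ℕ) (f : ℤ → ℤ) : Prop :=
  (∀ i : ℤ, 0 ≤ i → i < (N:ℤ) → 0 ≤ f i ∧ f i < (N:ℤ)) ∧
  (∀ i j : ℤ, 0 ≤ i → i < (N:ℤ) → 0 ≤ j → j < (N:ℤ) → f i = f j → i = j)

lemma Fp_range (N : ℕ) (hN : 2 ≤ N) (f : ℤ → ℤ) (hf : Good N f) (i : ℤ) :
    0 ≤ Fp N f i ∧ Fp N f i < (N:ℤ) := by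
  have h0 : (0:ℤ) < (N:ℤ) := by exact_mod_cast Nat.lt_of_lt_of_le (by norm_num) hN
  exact hf.1 _ (Int.emod_nonneg _ (by omega)) (Int.emod_lt_of_pos _ h0)

lemma Fp_succ_ne (N : ℕ) (hN : 2 ≤ N) (f : ℤ → ℤ) (hf : Good N f) (i : ℤ) :
    Fp N f (i + 1) ≠ Fp N f i := by
  have h0 : (0:ℤ) < (N:ℤ) := by exact_mod_cast Nat.lt_of_lt_of_le (by norm_num) hN
  have h1 : 0 ≤ i % (N:ℤ) := Int.emod_nonneg _ (by omega)
  have h2 : i % (N:ℤ) < N := Int.emod_lt_of_pos _ h0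
  have h3 : 0 ≤ (i+1) % (N:ℤ) := Int.emod_nonneg _ (by omega)
  have h4 : (i+1) % (N:ℤ) < N := Int.emod_lt_of_pos _ h0
  have hne : (i+1) % (N:ℤ) ≠ i % (N:ℤ) := by
    intro he
    have := Int.emod_emod_of_dvd (1:ℤ) (dvd_refl (N:ℤ))
    rw [Int.emod_eq_emod_iff_emod_sub_eq_zero] at he
    have : (i + 1 - i) = 1 := by ring
    rw [this] at he
    rw [Int.emod_eq_of_lt (by norm_num) (by omega)] at he
    exact one_ne_zero he
  intro h
  exact hne (hf.2 _ _ h3 h4 h1 h2 h)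

/-- the corner function -/
def mkc (N : ℕ) (f g : ℤ → ℤ) (j : ℤ) : ℚ × ℚ :=
  if j % 2 = 0 then ((Fp N f (j/2) : ℚ) + 1/2, (Fp N g (j/2) : ℚ) + 1/2)
  else ((Fp N f ((j+1)/2) : ℚ) + 1/2, (Fp N g ((j-1)/2) : ℚ) + 1/2)

lemma mkc_even (N : ℕ) (f g : ℤ → ℤ) (i : ℤ) :
    mkc N f g (2*i) = ((Fp N f i : ℚ) + 1/2, (Fp N g i : ℚ) + 1/2) := by
  have h2 : (2*i) % 2 = 0 := by omega
  have h3 : (2*i) / 2 = i := by omega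
  simp [mkc, h2, h3]

lemma mkc_odd (N : ℕ) (f g : ℤ → ℤ) (i : ℤ) :
    mkc N f g (2*i+1) = ((Fp N f (i+1) : ℚ) + 1/2, (Fp N g i : ℚ) + 1/2) := by
  have h2 : (2*i+1) % 2 ≠ 0 := by omega
  have h3 : (2*i+1+1) / 2 = i+1 := by omega
  have h4 : (2*i+1-1) / 2 = i := by omega
  simp [mkc, h2, h3, h4]

end TNaux

namespace TNaux

lemma emod_self_int (N : ℕ) (i : ℤ) : (i + (N:ℤ)) % (N:ℤ) = i % (N:ℤ) := by
  have h : i + (N:ℤ) = i + (N:ℤ)*1 := by ring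
  rw [h, Int.add_mul_emod_self_left]

def mkLoop (N : ℕ) (f g : ℤ → ℤ) (hN : 2 ≤ N) (hf : Good N f) (hg : Good N g) :
    GridLoop N where
  c := mkc N f g
  hn := by omega
  periodic := by
    intro j
    rcases Int.emod_two_eq j with h | h
    · have h1 : (j + 2*(N:ℤ)) % 2 = 0 := by omega
      have h2 : (j + 2*(N:ℤ)) / 2 = j/2 + N := by omega
      simp only [mkc, h, h1, if_pos rfl, h2, Fp, emod_self_int]
      norm_num
    · have h1 : (j + 2*(N:ℤ)) % 2 = 1 := by omega
      have h2 : (j + 2*(N:ℤ) + 1) / 2 = (j+1)/2 + N := by omega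
      have h3 : (j + 2*(N:ℤ) - 1) / 2 = (j-1)/2 + N := by omega
      simp only [mkc, h, h1, h2, h3, Fp, emod_self_int]
      norm_num
  horiz := by
    intro j hj
    obtain ⟨i, rfl⟩ : ∃ i, j = 2*i := by
      obtain ⟨i, hi⟩ := hj; exact ⟨i, by omega⟩
    rw [mkc_even, mkc_odd]
  vert := by
    intro j hj
    obtain ⟨i, rfl⟩ : ∃ i, j = 2*i+1 := by
      obtain ⟨i, hi⟩ := hj; exact ⟨i, by omega⟩
    have : 2*i+1+1 = 2*(i+1) := by ring
    rw [this, mkc_even, mkc_odd]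
  corner := by
    intro j
    rcases Int.emod_two_eq j with h | h
    · obtain ⟨i, rfl⟩ : ∃ i, j = 2*i := ⟨j/2, by omega⟩
      rw [mkc_even, mkc_odd]
      intro hc
      have h1 := congrArg Prod.fst hc
      simp only at h1
      have : ((Fp N f (i+1) : ℚ)) = (Fp N f i : ℚ) := by linarith
      exact Fp_succ_ne N hN f hf i (by exact_mod_cast this)
    · obtain ⟨i, rfl⟩ : ∃ i, j = 2*i+1 := ⟨(j-1)/2, by omega⟩
      have h2 : 2*i+1+1 = 2*(i+1) := by ring
      rw [h2, mkc_even, mkc_odd]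
      intro hc
      have h1 := congrArg Prod.snd hc
      simp only at h1
      have : ((Fp N g (i+1) : ℚ)) = (Fp N g i : ℚ) := by linarith
      exact Fp_succ_ne N hN g hg i (by exact_mod_cast this)
  rowHeights := by
    intro i h0 h1
    rw [mkc_even]
    have hr := Fp_range N hN g hg i
    refine ⟨(Fp N g i).toNat, by omega, ?_⟩
    simp only
    congr 1
    exact_mod_cast congrArg (fun z : ℤ => (z:ℚ)) (Int.toNat_of_nonneg hr.1).symm
  colPositions := by
    intro i h0 h1
    rw [mkc_odd]
    have hr := Fp_range N hN f hf (i+1)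
    refine ⟨(Fp N f (i+1)).toNat, by omega, ?_⟩
    simp only
    congr 1
    exact_mod_cast congrArg (fun z : ℤ => (z:ℚ)) (Int.toNat_of_nonneg hr.1).symm
  rowsInj := by
    intro i i' h0 h1 h0' h1' he
    rw [mkc_even, mkc_even] at he
    simp only at he
    have : (Fp N g i : ℚ) = (Fp N g i' : ℚ) := by linarith
    have hgg : Fp N g i = Fp N g i' := by exact_mod_cast this
    have e1 : i % (N:ℤ) = i := Int.emod_eq_of_lt h0 h1
    have e2 : i' % (N:ℤ) = i' := Int.emod_eq_of_lt h0' h1'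
    rw [Fp, Fp, e1, e2] at hgg
    exact hg.2 _ _ h0 h1 h0' h1' hgg
  colsInj := by
    intro i i' h0 h1 h0' h1' he
    rw [mkc_odd, mkc_odd] at he
    simp only at he
    have : (Fp N f (i+1) : ℚ) = (Fp N f (i'+1) : ℚ) := by linarith
    have hff : Fp N f (i+1) = Fp N f (i'+1) := by exact_mod_cast this
    have h0N : (0:ℤ) < (N:ℤ) := by omega
    have b1 : 0 ≤ (i+1) % (N:ℤ) := Int.emod_nonneg _ (by omega)
    have b2 : (i+1) % (N:ℤ) < N := Int.emod_lt_of_pos _ h0N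
    have b3 : 0 ≤ (i'+1) % (N:ℤ) := Int.emod_nonneg _ (by omega)
    have b4 : (i'+1) % (N:ℤ) < N := Int.emod_lt_of_pos _ h0N
    have hmm := hf.2 _ _ b1 b2 b3 b4 hff
    rw [Int.emod_eq_emod_iff_emod_sub_eq_zero] at hmm
    have hdd : (i + 1 - (i' + 1)) = i - i' := by ring
    rw [hdd] at hmm
    have hdvd : (N:ℤ) ∣ (i - i') := Int.dvd_of_emod_eq_zero hmm
    rcases eq_or_ne i i' with h | h
    · exact h
    · exfalso
      have habs2 : (N:ℤ) ∣ |i - i'| := (dvd_abs _ _).mpr hdvd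
      have hpos : 0 < |i - i'| := abs_pos.mpr (sub_ne_zero.mpr h)
      have hle := Int.le_of_dvd hpos habs2
      have : |i - i'| < N := abs_lt.mpr (by omega)
      omega

end TNaux

namespace TNaux

def Sg (x : ℤ) : ℚ := if 0 < x then 1 else -1

def DF (N : ℕ) (f : ℤ → ℤ) (i : ℤ) : ℤ := Fp N f (i+1) - Fp N f i

def Tt (N : ℕ) (f g : ℤ → ℤ) (i : ℤ) : ℚ :=
  Sg (DF N f i * DF N g i) + Sg (-(DF N g i * DF N f (i+1)))

lemma turnSign_hv (a b : ℤ) : turnSign ((a:ℚ), 0) (0, (b:ℚ)) = Sg (a*b) := by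
  unfold turnSign Sg
  have h : ((a:ℚ) * b - 0 * 0) = ((a*b : ℤ) : ℚ) := by push_cast; ring
  rw [h]
  by_cases hab : (0:ℤ) < a*b
  · rw [if_pos (by exact_mod_cast hab : (0:ℚ) < _), if_pos hab]
  · rw [if_neg (fun hc => hab (by exact_mod_cast hc)), if_neg hab]

lemma turnSign_vh (a b : ℤ) : turnSign (0, (a:ℚ)) ((b:ℚ), 0) = Sg (-(a*b)) := by
  unfold turnSign Sg
  have h : ((0:ℚ) * 0 - a * b) = ((-(a*b) : ℤ) : ℚ) := by push_cast; ring
  rw [h]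
  by_cases hab : (0:ℤ) < -(a*b)
  · rw [if_pos (by exact_mod_cast hab : (0:ℚ) < _), if_pos hab]
  · rw [if_neg (fun hc => hab (by exact_mod_cast hc)), if_neg hab]

lemma sum_pair (n : ℕ) (h : ℕ → ℚ) :
    ∑ j ∈ Finset.range (2*n), h j = ∑ i ∈ Finset.range n, (h (2*i) + h (2*i+1)) := by
  induction n with
  | zero => simp
  | succ k ih =>
      rw [show 2*(k+1) = (2*k)+1+1 by ring, Finset.sum_range_succ, Finset.sum_range_succ,
        ih, Finset.sum_range_succ]
      ring

lemma sum_triple (a M : ℕ) (h : ℕ → ℚ) :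
    ∑ j ∈ Finset.Ico a (a + 3*M), h j
      = ∑ r ∈ Finset.range M, (h (a+3*r) + h (a+3*r+1) + h (a+3*r+2)) := by
  induction M with
  | zero => simp
  | succ k ih =>
      have h1 : a + 3*(k+1) = (a + 3*k) + 1 + 1 + 1 := by ring
      rw [h1, Finset.sum_Ico_succ_top (by omega), Finset.sum_Ico_succ_top (by omega),
        Finset.sum_Ico_succ_top (by omega), ih, Finset.sum_range_succ]
      ring

lemma turning_mk (N : ℕ) (f g : ℤ → ℤ) (hN : 2 ≤ N) (hf : Good N f) (hg : Good N g) :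
    turningNumber (mkLoop N f g hN hf hg)
      = (1/4) * ∑ i ∈ Finset.range N, Tt N f g (i:ℤ) := by
  unfold turningNumber
  congr 1
  have hc : (mkLoop N f g hN hf hg).c = mkc N f g := rfl
  rw [hc, sum_pair]
  apply Finset.sum_congr rfl
  intro i _
  have e0 : ((2*i : ℕ) : ℤ) = 2*(i:ℤ) := by push_cast; ring
  have e3 : ((2*i+1 : ℕ) : ℤ) = 2*(i:ℤ)+1 := by push_cast; ring
  simp only [e0, e3]
  simp only [show (2*(i:ℤ)+1+1) = 2*((i:ℤ)+1) from by ring,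
    show (2*(i:ℤ)+1+2) = 2*((i:ℤ)+1)+1 from by ring,
    show (2*(i:ℤ)+2) = 2*((i:ℤ)+1) from by ring]
  simp only [mkc_even, mkc_odd]
  have A1 : ((Fp N f ((i:ℤ)+1) : ℚ) + 1/2, (Fp N g (i:ℤ) : ℚ) + 1/2)
      - ((Fp N f (i:ℤ) : ℚ) + 1/2, (Fp N g (i:ℤ) : ℚ) + 1/2)
      = ((DF N f (i:ℤ) : ℚ), 0) := by
    unfold DF
    apply Prod.ext
    · simp only [Prod.fst_sub]; push_cast; ring
    · simp only [Prod.snd_sub]; push_cast; ring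
  have A2 : ((Fp N f ((i:ℤ)+1) : ℚ) + 1/2, (Fp N g ((i:ℤ)+1) : ℚ) + 1/2)
      - ((Fp N f ((i:ℤ)+1) : ℚ) + 1/2, (Fp N g (i:ℤ) : ℚ) + 1/2)
      = (0, (DF N g (i:ℤ) : ℚ)) := by
    unfold DF
    apply Prod.ext
    · simp only [Prod.fst_sub]; push_cast; ring
    · simp only [Prod.snd_sub]; push_cast; ring
  have A3 : ((Fp N f ((i:ℤ)+1+1) : ℚ) + 1/2, (Fp N g ((i:ℤ)+1) : ℚ) + 1/2)
      - ((Fp N f ((i:ℤ)+1) : ℚ) + 1/2, (Fp N g ((i:ℤ)+1) : ℚ) + 1/2)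
      = ((DF N f ((i:ℤ)+1) : ℚ), 0) := by
    unfold DF
    apply Prod.ext
    · simp only [Prod.fst_sub]; push_cast; ring
    · simp only [Prod.snd_sub]; push_cast; ring
  rw [A1, A2, A3, turnSign_hv, turnSign_vh]
  rfl

lemma area_mk (N : ℕ) (f g : ℤ → ℤ) (hN : 2 ≤ N) (hf : Good N f) (hg : Good N g) :
    signedArea (mkLoop N f g hN hf hg)
      = ∑ i ∈ Finset.range N, ((Fp N g (i:ℤ) : ℚ) + 1/2) * (DF N f (i:ℤ) : ℚ) := by
  unfold signedArea
  apply Finset.sum_congr rfl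
  intro i _
  have hc : (mkLoop N f g hN hf hg).c = mkc N f g := rfl
  rw [hc]
  have e0 : ((2*i : ℕ) : ℤ) = 2*(i:ℤ) := by push_cast; ring
  simp only [e0, mkc_even, mkc_odd]
  unfold DF
  push_cast
  ring

lemma sum_DF_zero (N : ℕ) (f : ℤ → ℤ) :
    ∑ i ∈ Finset.range N, (DF N f (i:ℤ) : ℚ) = 0 := by
  have h := Finset.sum_range_sub (f := fun i : ℕ => (Fp N f (i:ℤ) : ℚ)) N
  have h2 : ∀ i : ℕ, (DF N f (i:ℤ) : ℚ)
      = (fun i : ℕ => (Fp N f (i:ℤ) : ℚ)) (i+1) - (fun i : ℕ => (Fp N f (i:ℤ) : ℚ)) i := by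
    intro i; unfold DF; push_cast; ring
  calc ∑ i ∈ Finset.range N, (DF N f (i:ℤ) : ℚ)
      = ∑ i ∈ Finset.range N, ((fun i : ℕ => (Fp N f (i:ℤ) : ℚ)) (i+1)
          - (fun i : ℕ => (Fp N f (i:ℤ) : ℚ)) i) := Finset.sum_congr rfl (fun i _ => h2 i)
    _ = (Fp N f (N:ℤ) : ℚ) - (Fp N f (0:ℤ) : ℚ) := h
    _ = 0 := by
        unfold Fp
        rw [Int.emod_self, Int.zero_emod]
        ring

lemma sum_g_gauss (N : ℕ) (hN : 2 ≤ N) (g : ℤ → ℤ) (hg : Good N g) :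
    ∑ i ∈ Finset.range N, (g (i:ℤ) : ℚ) = (N:ℚ)*((N:ℚ)-1)/2 := by
  classical
  set e : ℕ → ℕ := fun i => (g (i:ℤ)).toNat with he
  have hrange : ∀ i ∈ Finset.range N, e i ∈ Finset.range N := by
    intro i hi
    rw [Finset.mem_range] at *
    have := (hg.1 (i:ℤ) (by positivity) (by exact_mod_cast hi))
    simp only [he]
    omega
  have hinj : ∀ i ∈ Finset.range N, ∀ j ∈ Finset.range N, e i = e j → i = j := by
    intro i hi j hj hij
    rw [Finset.mem_range] at *
    have h1 := (hg.1 (i:ℤ) (by positivity) (by exact_mod_cast hi))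
    have h2 := (hg.1 (j:ℤ) (by positivity) (by exact_mod_cast hj))
    have : g (i:ℤ) = g (j:ℤ) := by simp only [he] at hij; omega
    have := hg.2 (i:ℤ) (j:ℤ) (by positivity) (by exact_mod_cast hi) (by positivity)
      (by exact_mod_cast hj) this
    exact_mod_cast this
  have himg : (Finset.range N).image e = Finset.range N := by
    apply Finset.eq_of_subset_of_card_le
    · intro v hv
      obtain ⟨i, hi, rfl⟩ := Finset.mem_image.mp hv
      exact hrange i hi
    · rw [Finset.card_image_of_injOn (fun i hi j hj => hinj i hi j hj)]
  have hs : ∑ v ∈ Finset.range N, (v:ℚ) = ∑ i ∈ Finset.range N, ((e i : ℕ) : ℚ) := by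
    conv_lhs => rw [← himg]
    exact Finset.sum_image (fun i hi j hj => hinj i hi j hj)
  have hgauss : ∑ v ∈ Finset.range N, (v:ℚ) = (N:ℚ)*((N:ℚ)-1)/2 := by
    have h2 := Finset.sum_range_id_mul_two N
    have : ((∑ i ∈ Finset.range N, i : ℕ) : ℚ) * 2 = (N:ℚ) * ((N:ℚ) - 1) := by
      rw [← Nat.cast_ofNat, ← Nat.cast_mul, h2]
      push_cast [Nat.cast_sub (by omega : 1 ≤ N)]
      ring
    rw [Nat.cast_sum] at this
    linarith
  rw [← hgauss, hs]
  apply Finset.sum_congr rfl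
  intro i hi
  rw [Finset.mem_range] at hi
  have := (hg.1 (i:ℤ) (by positivity) (by exact_mod_cast hi)).1
  simp only [he]
  exact_mod_cast congrArg (fun z : ℤ => (z:ℚ)) (Int.toNat_of_nonneg this).symm

end TNaux

namespace TNaux

lemma Sg_add_pp {a b a' : ℤ} (ha : 0 < a) (ha' : 0 < a') (hb : b ≠ 0) :
    Sg (a*b) + Sg (-(b*a')) = 0 := by
  unfold Sg
  rcases hb.lt_or_gt with h | h
  · rw [if_neg (by nlinarith), if_pos (by nlinarith)]; ring
  · rw [if_pos (by nlinarith), if_neg (by nlinarith)]; ring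

lemma Sg_add_nn {a b a' : ℤ} (ha : a < 0) (ha' : a' < 0) (hb : b ≠ 0) :
    Sg (a*b) + Sg (-(b*a')) = 0 := by
  unfold Sg
  rcases hb.lt_or_gt with h | h
  · rw [if_pos (by nlinarith), if_neg (by nlinarith)]; ring
  · rw [if_neg (by nlinarith), if_pos (by nlinarith)]; ring

lemma Sg_add_pn_pos {a b a' : ℤ} (ha : 0 < a) (ha' : a' < 0) (hb : 0 < b) :
    Sg (a*b) + Sg (-(b*a')) = 2 := by
  unfold Sg
  rw [if_pos (by nlinarith), if_pos (by nlinarith)]; ring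

lemma Sg_add_pn_neg {a b a' : ℤ} (ha : 0 < a) (ha' : a' < 0) (hb : b < 0) :
    Sg (a*b) + Sg (-(b*a')) = -2 := by
  unfold Sg
  rw [if_neg (by nlinarith), if_neg (by nlinarith)]; ring

lemma Sg_add_np_neg {a b a' : ℤ} (ha : a < 0) (ha' : 0 < a') (hb : b < 0) :
    Sg (a*b) + Sg (-(b*a')) = 2 := by
  unfold Sg
  rw [if_pos (by nlinarith), if_pos (by nlinarith)]; ring

lemma Fp_eq (N : ℕ) (f : ℤ → ℤ) {i : ℤ} (h0 : 0 ≤ i) (h1 : i < (N:ℤ)) :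
    Fp N f i = f i := by
  unfold Fp; rw [Int.emod_eq_of_lt h0 h1]

lemma Fp_N (N : ℕ) (f : ℤ → ℤ) : Fp N f (N:ℤ) = f 0 := by
  unfold Fp; rw [Int.emod_self]

lemma Fp_N1 (N : ℕ) (hN : 2 ≤ N) (f : ℤ → ℤ) : Fp N f ((N:ℤ)+1) = f 1 := by
  unfold Fp
  have h : ((N:ℤ)+1) = 1 + (N:ℤ) := by ring
  rw [h, emod_self_int, Int.emod_eq_of_lt (by norm_num) (by exact_mod_cast hN)]

/-! ### Template A : turning number 0, n odd -/

def g0 (N : ℕ) (H : ℤ) : ℤ → ℤ := fun i =>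
  if i = (N:ℤ)-1 then H else if i < H then i else i+1

lemma good_f0 (N : ℕ) (hN : 2 ≤ N) : Good N (fun i => i) :=
  ⟨fun i h0 h1 => ⟨h0, h1⟩, fun i j _ _ _ _ h => h⟩

lemma good_g0 (N : ℕ) (hN : 5 ≤ N) (H : ℤ) (hH1 : 1 ≤ H) (hH2 : H ≤ (N:ℤ)-2) :
    Good N (g0 N H) := by
  constructor
  · intro i h0 h1
    unfold g0; split_ifs <;> omega
  · intro i j h0 h1 h0' h1' h
    unfold g0 at h; split_ifs at h <;> omega

def loopA (N : ℕ) (hN : 5 ≤ N) (H : ℤ) (hH1 : 1 ≤ H) (hH2 : H ≤ (N:ℤ)-2) : GridLoop N :=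
  mkLoop N (fun i => i) (g0 N H) (by omega) (good_f0 N (by omega)) (good_g0 N hN H hH1 hH2)

lemma loopA_turning (N : ℕ) (hN : 5 ≤ N) (H : ℤ) (hH1 : 1 ≤ H) (hH2 : H ≤ (N:ℤ)-2) :
    turningNumber (loopA N hN H hH1 hH2) = 0 := by
  have hgood := good_g0 N hN H hH1 hH2
  rw [loopA, turning_mk]
  rw [show Finset.range N = Finset.range ((N-2)+1+1) by congr 1; omega,
    Finset.sum_range_succ, Finset.sum_range_succ]
  have hz : ∀ i ∈ Finset.range (N-2), Tt N (fun i => i) (g0 N H) (i:ℤ) = 0 := by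
    intro i hi
    rw [Finset.mem_range] at hi
    unfold Tt
    have hiN : (i:ℤ) < (N:ℤ) - 2 := by omega
    have d1 : DF N (fun i => i) (i:ℤ) = 1 := by
      unfold DF
      rw [Fp_eq N _ (by positivity) (by omega), Fp_eq N _ (by positivity) (by omega)]
      ring
    have d2 : DF N (fun i => i) ((i:ℤ)+1) = 1 := by
      unfold DF
      rw [Fp_eq N _ (by positivity) (by omega), Fp_eq N _ (by positivity) (by omega)]
      ring
    rw [d1, d2]
    exact Sg_add_pp (by norm_num) (by norm_num) (by
      intro hc
      exact Fp_succ_ne N (by omega) _ hgood (i:ℤ) (by unfold DF at hc; omega))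
  rw [Finset.sum_congr rfl hz, Finset.sum_const_zero]
  have c1 : ((N-2 : ℕ) : ℤ) = (N:ℤ)-2 := by omega
  have c2 : ((N-2+1 : ℕ) : ℤ) = (N:ℤ)-1 := by omega
  have tA : Tt N (fun i => i) (g0 N H) ((N:ℤ)-2) = -2 := by
    unfold Tt
    have d1 : DF N (fun i => i) ((N:ℤ)-2) = 1 := by
      unfold DF
      rw [Fp_eq N _ (by omega) (by omega), Fp_eq N _ (by omega) (by omega)]; ring
    have d2 : DF N (fun i => i) ((N:ℤ)-2+1) = -((N:ℤ)-1) := by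
      unfold DF
      have h : (N:ℤ)-2+1+1 = (N:ℤ) := by ring
      rw [h, Fp_N, Fp_eq N _ (by omega) (by omega)]
      ring
    have d3 : DF N (g0 N H) ((N:ℤ)-2) = H - ((N:ℤ)-1) := by
      unfold DF
      rw [Fp_eq N _ (by omega) (by omega), Fp_eq N _ (by omega) (by omega)]
      unfold g0
      rw [if_pos (by ring), if_neg (by omega), if_neg (by omega)]
      ring
    rw [d1, d2, d3]
    exact Sg_add_pn_neg (by norm_num) (by omega) (by omega)
  have tB : Tt N (fun i => i) (g0 N H) ((N:ℤ)-1) = 2 := by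
    unfold Tt
    have d1 : DF N (fun i => i) ((N:ℤ)-1) = -((N:ℤ)-1) := by
      unfold DF
      have h : (N:ℤ)-1+1 = (N:ℤ) := by ring
      rw [h, Fp_N, Fp_eq N _ (by omega) (by omega)]
      ring
    have d2 : DF N (fun i => i) ((N:ℤ)-1+1) = 1 := by
      unfold DF
      have h : (N:ℤ)-1+1 = (N:ℤ) := by ring
      rw [h, Fp_N, Fp_N1 N (by omega)]
      norm_num
    have d3 : DF N (g0 N H) ((N:ℤ)-1) = -H := by
      unfold DF
      have h : (N:ℤ)-1+1 = (N:ℤ) := by ring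
      rw [h, Fp_N, Fp_eq N _ (by omega) (by omega)]
      unfold g0
      rw [if_pos rfl, if_neg (by omega), if_pos (by omega)]
      ring
    rw [d1, d2, d3]
    exact Sg_add_np_neg (by omega) (by norm_num) (by omega)
  rw [c1, c2, tA, tB]
  ring

lemma loopA_area (N : ℕ) (hN : 5 ≤ N) (H : ℤ) (hH1 : 1 ≤ H) (hH2 : H ≤ (N:ℤ)-2)
    (hodd : 2*H = (N:ℤ)-1) :
    signedArea (loopA N hN H hH1 hH2) = 0 := by
  have hgood := good_g0 N hN H hH1 hH2
  rw [loopA, area_mk]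
  rw [show Finset.range N = Finset.range ((N-1)+1) by congr 1; omega,
    Finset.sum_range_succ]
  have hz : ∀ i ∈ Finset.range (N-1),
      ((Fp N (g0 N H) (i:ℤ) : ℚ) + 1/2) * (DF N (fun i => i) (i:ℤ) : ℚ)
        = (g0 N H (i:ℤ) : ℚ) + 1/2 := by
    intro i hi
    rw [Finset.mem_range] at hi
    have hiN : (i:ℤ) < (N:ℤ) - 1 := by omega
    have d1 : DF N (fun i => i) (i:ℤ) = 1 := by
      unfold DF
      rw [Fp_eq N _ (by positivity) (by omega), Fp_eq N _ (by positivity) (by omega)]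
      ring
    rw [d1, Fp_eq N _ (by positivity) (by omega)]
    push_cast; ring
  rw [Finset.sum_congr rfl hz]
  have c1 : ((N-1 : ℕ) : ℤ) = (N:ℤ)-1 := by omega
  have d2 : DF N (fun i => i) ((N:ℤ)-1) = -((N:ℤ)-1) := by
    unfold DF
    have h : (N:ℤ)-1+1 = (N:ℤ) := by ring
    rw [h, Fp_N, Fp_eq N _ (by omega) (by omega)]
    ring
  have hlast : Fp N (g0 N H) ((N:ℤ)-1) = H := by
    rw [Fp_eq N _ (by omega) (by omega)]
    unfold g0
    rw [if_pos rfl]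
  have hsum : ∑ i ∈ Finset.range (N-1), ((g0 N H (i:ℤ) : ℚ) + 1/2)
      = (∑ i ∈ Finset.range (N-1), (g0 N H (i:ℤ) : ℚ)) + ((N:ℚ)-1)/2 := by
    rw [Finset.sum_add_distrib, Finset.sum_const, Finset.card_range]
    have : ((N-1:ℕ):ℚ) = (N:ℚ)-1 := by
      push_cast [Nat.cast_sub (by omega : 1 ≤ N)]; ring
    rw [nsmul_eq_mul, this]
    ring
  have hg : ∑ i ∈ Finset.range (N-1), (g0 N H (i:ℤ) : ℚ)
      = (N:ℚ)*((N:ℚ)-1)/2 - (H:ℚ) := by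
    have h := sum_g_gauss N (by omega) (g0 N H) hgood
    rw [show Finset.range N = Finset.range ((N-1)+1) by congr 1; omega,
      Finset.sum_range_succ, c1] at h
    have : (g0 N H ((N:ℤ)-1) : ℚ) = (H:ℚ) := by
      unfold g0; rw [if_pos rfl]
    rw [this] at h
    linarith
  rw [c1, hsum, hg, hlast, d2]
  have hH : (H:ℚ)*2 = (N:ℚ)-1 := by
    have := congrArg (fun z : ℤ => (z:ℚ)) hodd
    push_cast at this
    linarith
  push_cast
  nlinarith [hH]

end TNaux

namespace TNaux

/-! ### Template B : turning number m ≥ 1 -/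

def fB (N m : ℕ) : ℤ → ℤ := fun i =>
  if i ≤ (N:ℤ)-1-3*(m:ℤ) then i
  else ((N:ℤ)-1-3*(m:ℤ)) + 3*((i - ((N:ℤ)-1-3*(m:ℤ)) - 1)/3) +
    (if (i - ((N:ℤ)-1-3*(m:ℤ)) - 1) % 3 = 0 then 2
     else if (i - ((N:ℤ)-1-3*(m:ℤ)) - 1) % 3 = 1 then 3 else 1)

def psiB (m p q t : ℤ) : ℤ :=
  if t = 0 then 0 else if t ≤ p - m then t + m - 1
  else if t ≤ q - m - 1 then t + m else t + m + 1

def gC (N m u H : ℕ) : ℤ → ℤ := fun i =>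
  if i < (N:ℤ)-1-3*(m:ℤ) then psiB m (min (u:ℤ) (H:ℤ)) (max (u:ℤ) (H:ℤ)) i
  else if i = (N:ℤ)-1-3*(m:ℤ) then (u:ℤ)
  else if (i - ((N:ℤ)-1-3*(m:ℤ)) - 1) % 3 = 0 then
    psiB m (min (u:ℤ) (H:ℤ)) (max (u:ℤ) (H:ℤ))
      ((N:ℤ)-1-3*(m:ℤ) + (i - ((N:ℤ)-1-3*(m:ℤ)) - 1)/3)
  else if (i - ((N:ℤ)-1-3*(m:ℤ)) - 1) % 3 = 1 then
    (N:ℤ) - (m:ℤ) + (i - ((N:ℤ)-1-3*(m:ℤ)) - 1)/3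
  else if (i - ((N:ℤ)-1-3*(m:ℤ)) - 1)/3 = (m:ℤ) - 1 then (H:ℤ)
  else (i - ((N:ℤ)-1-3*(m:ℤ)) - 1)/3 + 1

lemma good_fB (N m : ℕ) (hm : 1 ≤ m) (hN : 3*m + 20 ≤ N) : Good N (fB N m) := by
  constructor
  · intro i h0 h1
    simp only [fB]
    split_ifs <;> omega
  · intro i j h0 h1 h0' h1' h
    simp only [fB] at h
    split_ifs at h <;> omega

set_option maxHeartbeats 3200000 in
lemma good_gC (N m u H : ℕ) (hm : 1 ≤ m) (hN : 3*m + 20 ≤ N)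
    (hu1 : m ≤ u) (hu2 : (u:ℤ) ≤ (N:ℤ)-(m:ℤ)-1)
    (hH1 : m ≤ H) (hH2 : (H:ℤ) ≤ (N:ℤ)-(m:ℤ)-1) (huH : u ≠ H) : Good N (gC N m u H) := by
  constructor
  · intro i h0 h1
    simp only [gC, psiB, min_def, max_def]
    split_ifs <;> omega
  · intro i j h0 h1 h0' h1' h
    simp only [gC, psiB, min_def, max_def] at h
    split_ifs at h <;> omega

end TNaux

namespace TNaux

section TBeval

variable (N m u H : ℕ)

lemma psiB_le (p q t : ℤ) (h : 0 ≤ t) : psiB (m:ℤ) p q t ≤ t + m + 1 := by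
  simp only [psiB]; split_ifs <;> omega

lemma psiB_ge (p q t : ℤ) (h : 1 ≤ t) : (t:ℤ) + m - 1 ≤ psiB (m:ℤ) p q t := by
  simp only [psiB]; split_ifs <;> omega

lemma psiB_zero (p q : ℤ) : psiB (m:ℤ) p q 0 = 0 := by simp [psiB]

lemma gC_eval_lt (i : ℤ) (h : i < (N:ℤ)-1-3*(m:ℤ)) :
    gC N m u H i = psiB (m:ℤ) (min (u:ℤ) (H:ℤ)) (max (u:ℤ) (H:ℤ)) i := by
  simp only [gC]; rw [if_pos h]

lemma gC_eval_x : gC N m u H ((N:ℤ)-1-3*(m:ℤ)) = (u:ℤ) := by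
  simp only [gC]; rw [if_neg (by omega)]; simp

lemma gC_eval_s0 (r : ℕ) (hr : r < m) (hN : 3*m ≤ N) :
    gC N m u H ((N:ℤ)-3*(m:ℤ)+3*(r:ℤ))
      = psiB (m:ℤ) (min (u:ℤ) (H:ℤ)) (max (u:ℤ) (H:ℤ)) ((N:ℤ)-1-3*(m:ℤ)+(r:ℤ)) := by
  have hr' : (r:ℤ) < (m:ℤ) := by exact_mod_cast hr
  simp only [gC]
  rw [if_neg (by omega), if_neg (by omega), if_pos (by omega)]
  congr 1
  omega

lemma gC_eval_s1 (r : ℕ) (hr : r < m) (hN : 3*m ≤ N) :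
    gC N m u H ((N:ℤ)-3*(m:ℤ)+3*(r:ℤ)+1) = (N:ℤ)-(m:ℤ)+(r:ℤ) := by
  have hr' : (r:ℤ) < (m:ℤ) := by exact_mod_cast hr
  simp only [gC]
  rw [if_neg (by omega), if_neg (by omega), if_neg (by omega), if_pos (by omega)]
  omega

lemma gC_eval_s2a (r : ℕ) (hr : (r:ℤ) < (m:ℤ)-1) (hN : 3*m ≤ N) :
    gC N m u H ((N:ℤ)-3*(m:ℤ)+3*(r:ℤ)+2) = (r:ℤ)+1 := by
  simp only [gC]
  rw [if_neg (by omega), if_neg (by omega), if_neg (by omega), if_neg (by omega),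
    if_neg (by omega)]
  omega

lemma gC_eval_last (hm : 1 ≤ m) (hN : 3*m + 2 ≤ N) :
    gC N m u H ((N:ℤ)-1) = (H:ℤ) := by
  simp only [gC]
  rw [if_neg (by omega), if_neg (by omega), if_neg (by omega), if_neg (by omega),
    if_pos (by omega)]

end TBeval

section TBdf

variable (N m u H : ℕ) (hm : 1 ≤ m) (hN : 3*m + 20 ≤ N)

include hm hN

lemma dfB_pos (j : ℤ) (h0 : 0 ≤ j) (h1 : j ≤ (N:ℤ)-3*(m:ℤ)) :
    0 < DF N (fB N m) j := by
  unfold DF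
  rw [Fp_eq N _ (by omega) (by omega), Fp_eq N _ (by omega) (by omega)]
  simp only [fB]
  split_ifs <;> omega

lemma dfB1 (r : ℕ) (hr : r < m) : DF N (fB N m) ((N:ℤ)-3*(m:ℤ)+3*(r:ℤ)) = 1 := by
  have hr' : (r:ℤ) < (m:ℤ) := by exact_mod_cast hr
  unfold DF
  rw [Fp_eq N _ (by omega) (by omega), Fp_eq N _ (by omega) (by omega)]
  simp only [fB]
  split_ifs <;> omega

lemma dfB2 (r : ℕ) (hr : r < m) : DF N (fB N m) ((N:ℤ)-3*(m:ℤ)+3*(r:ℤ)+1) = -2 := by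
  have hr' : (r:ℤ) < (m:ℤ) := by exact_mod_cast hr
  unfold DF
  rw [Fp_eq N _ (by omega) (by omega), Fp_eq N _ (by omega) (by omega)]
  simp only [fB]
  split_ifs <;> omega

lemma dfB3 (r : ℕ) (hr : (r:ℤ) < (m:ℤ)-1) :
    DF N (fB N m) ((N:ℤ)-3*(m:ℤ)+3*(r:ℤ)+2) = 4 := by
  unfold DF
  rw [Fp_eq N _ (by omega) (by omega), Fp_eq N _ (by omega) (by omega)]
  simp only [fB]
  split_ifs <;> omega

lemma dfB3' : DF N (fB N m) ((N:ℤ)-1) = -((N:ℤ)-3) := by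
  unfold DF
  rw [show (N:ℤ)-1+1 = (N:ℤ) from by ring, Fp_N, Fp_eq N _ (by omega) (by omega)]
  simp only [fB]
  split_ifs <;> omega

lemma dfB4 : DF N (fB N m) (N:ℤ) = 1 := by
  unfold DF
  rw [Fp_N1 N (by omega), Fp_N]
  simp only [fB]
  split_ifs <;> omega

end TBdf

section TBdg

variable (N m u H : ℕ) (hm : 1 ≤ m) (hN : 3*m + 20 ≤ N)
  (hu1 : m ≤ u) (hu2 : (u:ℤ) ≤ (N:ℤ)-(m:ℤ)-1)
  (hH1 : m ≤ H) (hH2 : (H:ℤ) ≤ (N:ℤ)-(m:ℤ)-1)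

include hm hN hu1 hu2 hH1 hH2

lemma dgC1_pos (r : ℕ) (hr : r < m) :
    0 < DF N (gC N m u H) ((N:ℤ)-3*(m:ℤ)+3*(r:ℤ)) := by
  have hr' : (r:ℤ) < (m:ℤ) := by exact_mod_cast hr
  unfold DF
  rw [Fp_eq N _ (by omega) (by omega), Fp_eq N _ (by omega) (by omega)]
  rw [gC_eval_s1 N m u H r hr (by omega), gC_eval_s0 N m u H r hr (by omega)]
  have := psiB_le m (min (u:ℤ) (H:ℤ)) (max (u:ℤ) (H:ℤ)) ((N:ℤ)-1-3*(m:ℤ)+(r:ℤ)) (by omega)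
  omega

lemma dgC2_neg (r : ℕ) (hr : (r:ℤ) < (m:ℤ)-1) :
    DF N (gC N m u H) ((N:ℤ)-3*(m:ℤ)+3*(r:ℤ)+1) < 0 := by
  have hr2 : r < m := by omega
  unfold DF
  rw [Fp_eq N _ (by omega) (by omega), Fp_eq N _ (by omega) (by omega)]
  rw [show (N:ℤ)-3*(m:ℤ)+3*(r:ℤ)+1+1 = (N:ℤ)-3*(m:ℤ)+3*(r:ℤ)+2 from by ring]
  rw [gC_eval_s2a N m u H r hr (by omega), gC_eval_s1 N m u H r hr2 (by omega)]
  omega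

lemma dgC2' : DF N (gC N m u H) ((N:ℤ)-2) ≠ 0 := by
  have hr2 : m - 1 < m := by omega
  unfold DF
  rw [Fp_eq N _ (by omega) (by omega), Fp_eq N _ (by omega) (by omega)]
  rw [show (N:ℤ)-2+1 = (N:ℤ)-1 from by ring, gC_eval_last N m u H hm (by omega)]
  rw [show (N:ℤ)-2 = (N:ℤ)-3*(m:ℤ)+3*((m-1:ℕ):ℤ)+1 from by push_cast; omega]
  rw [gC_eval_s1 N m u H (m-1) hr2 (by omega)]
  push_cast
  omega

lemma dgC3_ne (r : ℕ) (hr : (r:ℤ) < (m:ℤ)-1) :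
    DF N (gC N m u H) ((N:ℤ)-3*(m:ℤ)+3*(r:ℤ)+2) ≠ 0 := by
  have hr2 : r + 1 < m := by omega
  unfold DF
  rw [Fp_eq N _ (by omega) (by omega), Fp_eq N _ (by omega) (by omega)]
  rw [show (N:ℤ)-3*(m:ℤ)+3*(r:ℤ)+2+1 = (N:ℤ)-3*(m:ℤ)+3*((r+1:ℕ):ℤ) from by push_cast; ring]
  rw [gC_eval_s0 N m u H (r+1) hr2 (by omega), gC_eval_s2a N m u H r hr (by omega)]
  have := psiB_ge m (min (u:ℤ) (H:ℤ)) (max (u:ℤ) (H:ℤ)) ((N:ℤ)-1-3*(m:ℤ)+((r+1:ℕ):ℤ))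
    (by push_cast; omega)
  push_cast at this ⊢
  omega

lemma dgC3' : DF N (gC N m u H) ((N:ℤ)-1) < 0 := by
  unfold DF
  rw [show (N:ℤ)-1+1 = (N:ℤ) from by ring, Fp_N, Fp_eq N _ (by omega) (by omega)]
  rw [gC_eval_last N m u H hm (by omega), gC_eval_lt N m u H 0 (by omega), psiB_zero]
  omega

end TBdg

end TNaux

namespace TNaux

section TBmain

variable (N m u H : ℕ) (hm : 1 ≤ m) (hN : 3*m + 20 ≤ N)
  (hu1 : m ≤ u) (hu2 : (u:ℤ) ≤ (N:ℤ)-(m:ℤ)-1)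
  (hH1 : m ≤ H) (hH2 : (H:ℤ) ≤ (N:ℤ)-(m:ℤ)-1) (huH : u ≠ H)

include hm hN hu1 hu2 hH1 hH2 huH

lemma dfBX : DF N (fB N m) ((N:ℤ)-1-3*(m:ℤ)) = 2 := by
  unfold DF
  rw [Fp_eq N _ (by omega) (by omega), Fp_eq N _ (by omega) (by omega)]
  simp only [fB]
  split_ifs <;> omega

def loopB : GridLoop N :=
  mkLoop N (fB N m) (gC N m u H) (by omega) (good_fB N m hm (by omega))
    (good_gC N m u H hm (by omega) hu1 hu2 hH1 hH2 huH)

lemma loopB_turning :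
    turningNumber (loopB N m u H hm hN hu1 hu2 hH1 hH2 huH) = (m:ℚ) := by
  rw [loopB, turning_mk]
  have hgood := good_gC N m u H hm (by omega) hu1 hu2 hH1 hH2 huH
  set X : ℕ := N - 1 - 3*m with hX
  have hXZ : (X:ℤ) = (N:ℤ)-1-3*(m:ℤ) := by omega
  rw [Finset.range_eq_Ico,
    ← Finset.sum_Ico_consecutive _ (show 0 ≤ X+1 by omega) (show X+1 ≤ N by omega)]
  have h1 : ∀ i ∈ Finset.Ico 0 (X+1), Tt N (fB N m) (gC N m u H) (i:ℤ) = 0 := by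
    intro i hi
    rw [Finset.mem_Ico] at hi
    unfold Tt
    apply Sg_add_pp
    · exact dfB_pos N m hm hN (i:ℤ) (by omega) (by omega)
    · exact dfB_pos N m hm hN ((i:ℤ)+1) (by omega) (by omega)
    · intro hc
      exact Fp_succ_ne N (by omega) _ hgood (i:ℤ) (by unfold DF at hc; omega)
  rw [Finset.sum_congr rfl h1, Finset.sum_const_zero, zero_add]
  rw [show Finset.Ico (X+1) N = Finset.Ico (X+1) ((X+1)+3*m) from by congr 1; omega]
  rw [sum_triple (X+1) m _]
  have h2 : ∀ r ∈ Finset.range m,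
      (Tt N (fB N m) (gC N m u H) ((X+1+3*r : ℕ):ℤ)
        + Tt N (fB N m) (gC N m u H) ((X+1+3*r+1 : ℕ):ℤ)
        + Tt N (fB N m) (gC N m u H) ((X+1+3*r+2 : ℕ):ℤ)) = 4 := by
    intro r hr
    rw [Finset.mem_range] at hr
    have e0 : ((X+1+3*r : ℕ):ℤ) = (N:ℤ)-3*(m:ℤ)+3*(r:ℤ) := by push_cast; omega
    have e1 : ((X+1+3*r+1 : ℕ):ℤ) = (N:ℤ)-3*(m:ℤ)+3*(r:ℤ)+1 := by push_cast; omega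
    have e2 : ((X+1+3*r+2 : ℕ):ℤ) = (N:ℤ)-3*(m:ℤ)+3*(r:ℤ)+2 := by push_cast; omega
    rw [e0, e1, e2]
    have T1 : Tt N (fB N m) (gC N m u H) ((N:ℤ)-3*(m:ℤ)+3*(r:ℤ)) = 2 := by
      unfold Tt
      rw [show (N:ℤ)-3*(m:ℤ)+3*(r:ℤ)+1 = (N:ℤ)-3*(m:ℤ)+3*(r:ℤ)+1 from rfl]
      rw [dfB1 N m hm hN r hr, dfB2 N m hm hN r hr]
      exact Sg_add_pn_pos (by norm_num) (by norm_num)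
        (dgC1_pos N m u H hm hN hu1 hu2 hH1 hH2 r hr)
    rcases lt_or_eq_of_le (show (r:ℤ) ≤ (m:ℤ)-1 by omega) with hrm | hrm
    · have T2 : Tt N (fB N m) (gC N m u H) ((N:ℤ)-3*(m:ℤ)+3*(r:ℤ)+1) = 2 := by
        unfold Tt
        rw [show (N:ℤ)-3*(m:ℤ)+3*(r:ℤ)+1+1 = (N:ℤ)-3*(m:ℤ)+3*(r:ℤ)+2 from by ring]
        rw [dfB2 N m hm hN r hr, dfB3 N m hm hN r hrm]
        exact Sg_add_np_neg (by norm_num) (by norm_num)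
          (dgC2_neg N m u H hm hN hu1 hu2 hH1 hH2 r hrm)
      have T3 : Tt N (fB N m) (gC N m u H) ((N:ℤ)-3*(m:ℤ)+3*(r:ℤ)+2) = 0 := by
        unfold Tt
        rw [show (N:ℤ)-3*(m:ℤ)+3*(r:ℤ)+2+1 = (N:ℤ)-3*(m:ℤ)+3*((r+1:ℕ):ℤ) from by
          push_cast; ring]
        rw [dfB3 N m hm hN r hrm, dfB1 N m hm hN (r+1) (by omega)]
        exact Sg_add_pp (by norm_num) (by norm_num)
          (dgC3_ne N m u H hm hN hu1 hu2 hH1 hH2 r hrm)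
      rw [T1, T2, T3]; ring
    · have hr1 : (r:ℤ) = (m:ℤ)-1 := hrm
      have er1 : (N:ℤ)-3*(m:ℤ)+3*(r:ℤ)+1 = (N:ℤ)-2 := by omega
      have er2 : (N:ℤ)-3*(m:ℤ)+3*(r:ℤ)+2 = (N:ℤ)-1 := by omega
      have T2 : Tt N (fB N m) (gC N m u H) ((N:ℤ)-3*(m:ℤ)+3*(r:ℤ)+1) = 0 := by
        unfold Tt
        rw [show (N:ℤ)-3*(m:ℤ)+3*(r:ℤ)+1+1 = (N:ℤ)-1 from by omega]
        rw [dfB2 N m hm hN r hr, dfB3' N m hm hN]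
        have hb := dgC2' N m u H hm hN hu1 hu2 hH1 hH2
        rw [er1]
        exact Sg_add_nn (by norm_num) (by omega) hb
      have T3 : Tt N (fB N m) (gC N m u H) ((N:ℤ)-3*(m:ℤ)+3*(r:ℤ)+2) = 2 := by
        unfold Tt
        rw [er2, show (N:ℤ)-1+1 = (N:ℤ) from by ring]
        rw [dfB3' N m hm hN, dfB4 N m hm hN]
        exact Sg_add_np_neg (by omega) (by norm_num)
          (dgC3' N m u H hm hN hu1 hu2 hH1 hH2)
      rw [T1, T2, T3]; ring
  rw [Finset.sum_congr rfl h2, Finset.sum_const, Finset.card_range]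
  rw [nsmul_eq_mul]
  ring

lemma loopB_area :
    signedArea (loopB N m u H hm hN hu1 hu2 hH1 hH2 huH)
      = (N:ℚ)*((N:ℚ)-1)/2 + (u:ℚ) + ((m:ℚ)-1)*(3*(m:ℚ)+3-3*(N:ℚ))
        - 3*((N:ℚ)-1) - ((N:ℚ)-2)*(H:ℚ) := by
  rw [loopB, area_mk]
  have hgood := good_gC N m u H hm (by omega) hu1 hu2 hH1 hH2 huH
  set X : ℕ := N - 1 - 3*m with hX
  have hXZ : (X:ℤ) = (N:ℤ)-1-3*(m:ℤ) := by omega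
  have hsplit : ∀ i : ℕ, ((Fp N (gC N m u H) (i:ℤ) : ℚ) + 1/2) * (DF N (fB N m) (i:ℤ) : ℚ)
      = (Fp N (gC N m u H) (i:ℤ) : ℚ)
        + (Fp N (gC N m u H) (i:ℤ) : ℚ) * ((DF N (fB N m) (i:ℤ) : ℚ) - 1)
        + (1/2) * (DF N (fB N m) (i:ℤ) : ℚ) := by
    intro i; ring
  rw [Finset.sum_congr rfl (fun i _ => hsplit i), Finset.sum_add_distrib,
    Finset.sum_add_distrib, ← Finset.mul_sum, sum_DF_zero, mul_zero, add_zero]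
  have hgg : ∑ i ∈ Finset.range N, (Fp N (gC N m u H) (i:ℤ) : ℚ)
      = (N:ℚ)*((N:ℚ)-1)/2 := by
    have hc : ∀ i ∈ Finset.range N,
        (Fp N (gC N m u H) (i:ℤ) : ℚ) = ((gC N m u H (i:ℤ)) : ℚ) := by
      intro i hi
      rw [Finset.mem_range] at hi
      rw [Fp_eq N _ (by positivity) (by omega)]
    rw [Finset.sum_congr rfl hc]
    exact sum_g_gauss N (by omega) _ hgood
  rw [hgg]
  have hmain : ∑ i ∈ Finset.range N,
      (Fp N (gC N m u H) (i:ℤ) : ℚ) * ((DF N (fB N m) (i:ℤ) : ℚ) - 1)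
      = (u:ℚ) + ((m:ℚ)-1)*(3*(m:ℚ)+3-3*(N:ℚ)) - 3*((N:ℚ)-1) - ((N:ℚ)-2)*(H:ℚ) := by
    rw [Finset.range_eq_Ico,
      ← Finset.sum_Ico_consecutive _ (show 0 ≤ X+1 by omega) (show X+1 ≤ N by omega)]
    have h1 : ∑ i ∈ Finset.Ico 0 (X+1),
        (Fp N (gC N m u H) (i:ℤ) : ℚ) * ((DF N (fB N m) (i:ℤ) : ℚ) - 1) = (u:ℚ) := by
      rw [Finset.sum_Ico_succ_top (by omega)]
      have hz : ∀ i ∈ Finset.Ico 0 X,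
          (Fp N (gC N m u H) (i:ℤ) : ℚ) * ((DF N (fB N m) (i:ℤ) : ℚ) - 1) = 0 := by
        intro i hi
        rw [Finset.mem_Ico] at hi
        have hd : DF N (fB N m) (i:ℤ) = 1 := by
          unfold DF
          rw [Fp_eq N _ (by omega) (by omega), Fp_eq N _ (by omega) (by omega)]
          simp only [fB]
          split_ifs <;> omega
        rw [hd]
        norm_num
      rw [Finset.sum_congr rfl hz, Finset.sum_const_zero, zero_add]
      rw [show ((X:ℕ):ℤ) = (N:ℤ)-1-3*(m:ℤ) from hXZ]
      rw [dfBX N m u H hm hN hu1 hu2 hH1 hH2 huH,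
        Fp_eq N _ (by omega) (by omega), gC_eval_x]
      norm_num
    rw [h1]
    rw [show Finset.Ico (X+1) N = Finset.Ico (X+1) ((X+1)+3*m) from by congr 1; omega]
    rw [sum_triple (X+1) m _]
    have h2 : ∀ r ∈ Finset.range m,
        ((Fp N (gC N m u H) ((X+1+3*r : ℕ):ℤ) : ℚ)
            * ((DF N (fB N m) ((X+1+3*r : ℕ):ℤ) : ℚ) - 1)
          + (Fp N (gC N m u H) ((X+1+3*r+1 : ℕ):ℤ) : ℚ)
            * ((DF N (fB N m) ((X+1+3*r+1 : ℕ):ℤ) : ℚ) - 1)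
          + (Fp N (gC N m u H) ((X+1+3*r+2 : ℕ):ℤ) : ℚ)
            * ((DF N (fB N m) ((X+1+3*r+2 : ℕ):ℤ) : ℚ) - 1))
        = (if r = m-1 then -3*((N:ℚ)-1) - ((N:ℚ)-2)*(H:ℚ)
           else (-3)*((N:ℚ)-(m:ℚ)+(r:ℚ)) + 3*((r:ℚ)+1)) := by
      intro r hr
      rw [Finset.mem_range] at hr
      have e0 : ((X+1+3*r : ℕ):ℤ) = (N:ℤ)-3*(m:ℤ)+3*(r:ℤ) := by push_cast; omega
      have e1 : ((X+1+3*r+1 : ℕ):ℤ) = (N:ℤ)-3*(m:ℤ)+3*(r:ℤ)+1 := by push_cast; omega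
      have e2 : ((X+1+3*r+2 : ℕ):ℤ) = (N:ℤ)-3*(m:ℤ)+3*(r:ℤ)+2 := by push_cast; omega
      rw [e0, e1, e2]
      have k1 : DF N (fB N m) ((N:ℤ)-3*(m:ℤ)+3*(r:ℤ)) = 1 := dfB1 N m hm hN r hr
      have k2 : DF N (fB N m) ((N:ℤ)-3*(m:ℤ)+3*(r:ℤ)+1) = -2 := dfB2 N m hm hN r hr
      have v2 : Fp N (gC N m u H) ((N:ℤ)-3*(m:ℤ)+3*(r:ℤ)+1) = (N:ℤ)-(m:ℤ)+(r:ℤ) := by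
        rw [Fp_eq N _ (by omega) (by omega)]
        exact gC_eval_s1 N m u H r hr (by omega)
      rcases Nat.lt_or_ge r (m-1) with hrm | hrm
      · have hrm' : (r:ℤ) < (m:ℤ)-1 := by omega
        have k3 : DF N (fB N m) ((N:ℤ)-3*(m:ℤ)+3*(r:ℤ)+2) = 4 := dfB3 N m hm hN r hrm'
        have v3 : Fp N (gC N m u H) ((N:ℤ)-3*(m:ℤ)+3*(r:ℤ)+2) = (r:ℤ)+1 := by
          rw [Fp_eq N _ (by omega) (by omega)]
          exact gC_eval_s2a N m u H r hrm' (by omega)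
        rw [k1, k2, k3, v2, v3, if_neg (by omega)]
        push_cast
        ring
      · have hrm' : r = m-1 := by omega
        have er2 : (N:ℤ)-3*(m:ℤ)+3*(r:ℤ)+2 = (N:ℤ)-1 := by omega
        have k3 : DF N (fB N m) ((N:ℤ)-3*(m:ℤ)+3*(r:ℤ)+2) = -((N:ℤ)-3) := by
          rw [er2]; exact dfB3' N m hm hN
        have v3 : Fp N (gC N m u H) ((N:ℤ)-3*(m:ℤ)+3*(r:ℤ)+2) = (H:ℤ) := by
          rw [er2, Fp_eq N _ (by omega) (by omega)]
          exact gC_eval_last N m u H hm (by omega)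
        rw [k1, k2, k3, v2, v3, if_pos hrm']
        have hrr : (r:ℚ) = (m:ℚ)-1 := by
          have : ((r:ℕ):ℤ) = (m:ℤ)-1 := by omega
          exact_mod_cast congrArg (fun z : ℤ => (z:ℚ)) this
        push_cast
        rw [hrr]
        ring
    rw [Finset.sum_congr rfl h2]
    rw [show Finset.range m = Finset.range ((m-1)+1) from by congr 1; omega,
      Finset.sum_range_succ]
    have h3 : ∀ r ∈ Finset.range (m-1),
        (if r = m-1 then -3*((N:ℚ)-1) - ((N:ℚ)-2)*(H:ℚ)
         else (-3)*((N:ℚ)-(m:ℚ)+(r:ℚ)) + 3*((r:ℚ)+1))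
        = 3*(m:ℚ)+3-3*(N:ℚ) := by
      intro r hr
      rw [Finset.mem_range] at hr
      rw [if_neg (by omega)]
      ring
    rw [Finset.sum_congr rfl h3, Finset.sum_const, Finset.card_range, if_pos rfl]
    have hm1 : ((m-1 : ℕ) : ℚ) = (m:ℚ)-1 := by
      have : ((m-1 : ℕ) : ℤ) = (m:ℤ)-1 := by omega
      exact_mod_cast congrArg (fun z : ℤ => (z:ℚ)) this
    rw [nsmul_eq_mul, hm1]
    ring
  rw [hmain]
  ring

end TBmain

end TNaux

namespace TNaux

lemma Sg_neg (x : ℤ) (hx : x ≠ 0) : Sg (-x) = -Sg x := by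
  unfold Sg
  rcases hx.lt_or_gt with h | h
  · rw [if_pos (by omega), if_neg (by omega)]; try norm_num
  · rw [if_neg (by omega), if_pos (by omega)]; try norm_num

def fBr (N m : ℕ) : ℤ → ℤ := fun i => (N:ℤ)-1-fB N m i

lemma good_fBr (N m : ℕ) (hm : 1 ≤ m) (hN : 3*m + 20 ≤ N) : Good N (fBr N m) := by
  have h := good_fB N m hm hN
  constructor
  · intro i h0 h1
    have := h.1 i h0 h1
    unfold fBr
    omega
  · intro i j h0 h1 h0' h1' he
    exact h.2 i j h0 h1 h0' h1' (by unfold fBr at he; omega)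

lemma dfBr (N m : ℕ) (i : ℤ) : DF N (fBr N m) i = -DF N (fB N m) i := by
  unfold DF Fp fBr
  ring

section TBR

variable (N m u H : ℕ) (hm : 1 ≤ m) (hN : 3*m + 20 ≤ N)
  (hu1 : m ≤ u) (hu2 : (u:ℤ) ≤ (N:ℤ)-(m:ℤ)-1)
  (hH1 : m ≤ H) (hH2 : (H:ℤ) ≤ (N:ℤ)-(m:ℤ)-1) (huH : u ≠ H)

include hm hN hu1 hu2 hH1 hH2 huH

def loopBr : GridLoop N :=
  mkLoop N (fBr N m) (gC N m u H) (by omega) (good_fBr N m hm hN)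
    (good_gC N m u H hm (by omega) hu1 hu2 hH1 hH2 huH)

lemma loopBr_turning :
    turningNumber (loopBr N m u H hm hN hu1 hu2 hH1 hH2 huH) = -(m:ℚ) := by
  have hgf := good_fB N m hm (by omega)
  have hgg := good_gC N m u H hm (by omega) hu1 hu2 hH1 hH2 huH
  have hsum : ∑ i ∈ Finset.range N, Tt N (fB N m) (gC N m u H) (i:ℤ) = 4*(m:ℚ) := by
    have h1 := loopB_turning N m u H hm hN hu1 hu2 hH1 hH2 huH
    rw [loopB, turning_mk] at h1
    nlinarith [h1]
  rw [loopBr, turning_mk]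
  have hpt : ∀ i ∈ Finset.range N,
      Tt N (fBr N m) (gC N m u H) (i:ℤ) = -Tt N (fB N m) (gC N m u H) (i:ℤ) := by
    intro i hi
    have ha : DF N (fB N m) (i:ℤ) ≠ 0 := by
      intro hc; exact Fp_succ_ne N (by omega) _ hgf (i:ℤ) (by unfold DF at hc; omega)
    have ha' : DF N (fB N m) ((i:ℤ)+1) ≠ 0 := by
      intro hc; exact Fp_succ_ne N (by omega) _ hgf ((i:ℤ)+1) (by unfold DF at hc; omega)
    have hb : DF N (gC N m u H) (i:ℤ) ≠ 0 := by
      intro hc; exact Fp_succ_ne N (by omega) _ hgg (i:ℤ) (by unfold DF at hc; omega)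
    unfold Tt
    rw [dfBr, dfBr]
    have e1 : -DF N (fB N m) (i:ℤ) * DF N (gC N m u H) (i:ℤ)
        = -(DF N (fB N m) (i:ℤ) * DF N (gC N m u H) (i:ℤ)) := by ring
    have e2 : -(DF N (gC N m u H) (i:ℤ) * -DF N (fB N m) ((i:ℤ)+1))
        = DF N (gC N m u H) (i:ℤ) * DF N (fB N m) ((i:ℤ)+1) := by ring
    have e3 : DF N (gC N m u H) (i:ℤ) * DF N (fB N m) ((i:ℤ)+1)
        = -(-(DF N (gC N m u H) (i:ℤ) * DF N (fB N m) ((i:ℤ)+1))) := by ring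
    rw [e1, e2, Sg_neg _ (mul_ne_zero ha hb), e3,
      Sg_neg _ (by intro hc; apply mul_ne_zero hb ha'; omega)]
    ring
  rw [Finset.sum_congr rfl hpt, Finset.sum_neg_distrib, hsum]
  ring

lemma loopBr_area (harea :
    (N:ℚ)*((N:ℚ)-1)/2 + (u:ℚ) + ((m:ℚ)-1)*(3*(m:ℚ)+3-3*(N:ℚ))
      - 3*((N:ℚ)-1) - ((N:ℚ)-2)*(H:ℚ) = 0) :
    signedArea (loopBr N m u H hm hN hu1 hu2 hH1 hH2 huH) = 0 := by
  have hsum : ∑ i ∈ Finset.range N,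
      ((Fp N (gC N m u H) (i:ℤ) : ℚ) + 1/2) * (DF N (fB N m) (i:ℤ) : ℚ) = 0 := by
    have h1 := loopB_area N m u H hm hN hu1 hu2 hH1 hH2 huH
    rw [loopB, area_mk] at h1
    rw [h1]
    exact harea
  rw [loopBr, area_mk]
  have hpt : ∀ i ∈ Finset.range N,
      ((Fp N (gC N m u H) (i:ℤ) : ℚ) + 1/2) * (DF N (fBr N m) (i:ℤ) : ℚ)
      = -(((Fp N (gC N m u H) (i:ℤ) : ℚ) + 1/2) * (DF N (fB N m) (i:ℤ) : ℚ)) := by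
    intro i _
    rw [dfBr]
    push_cast
    ring
  rw [Finset.sum_congr rfl hpt, Finset.sum_neg_distrib, hsum]
  ring

lemma loopB_area_zero (harea :
    (N:ℚ)*((N:ℚ)-1)/2 + (u:ℚ) + ((m:ℚ)-1)*(3*(m:ℚ)+3-3*(N:ℚ))
      - 3*((N:ℚ)-1) - ((N:ℚ)-2)*(H:ℚ) = 0) :
    signedArea (loopB N m u H hm hN hu1 hu2 hH1 hH2 huH) = 0 := by
  rw [loopB_area N m u H hm hN hu1 hu2 hH1 hH2 huH]
  exact harea

end TBR

end TNaux

namespace TNaux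

lemma exists_loop (M : ℕ) (t : ℤ) (ht : t.natAbs ≤ M) :
    ∃ G : GridLoop (12*M^2+49), turningNumber G = (t:ℚ) ∧ signedArea G = 0 := by
  set N : ℕ := 12*M^2+49 with hNdef
  have hNZ : (N:ℤ) = 12*((M^2:ℕ):ℤ)+49 := by omega
  rcases lt_trichotomy t 0 with htn | htz | htp
  · -- negative
    set τ : ℕ := t.natAbs with hτ
    have hτ1 : 1 ≤ τ := by omega
    have hτM : τ ≤ M := ht
    have hsq : τ^2 ≤ M^2 := Nat.pow_le_pow_left hτM 2
    have hMM : M ≤ M^2 := Nat.le_self_pow (by norm_num) M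
    have hττ : τ ≤ τ^2 := Nat.le_self_pow (by norm_num) τ
    have htτ : (t:ℚ) = -(τ:ℚ) := by
      have : (t:ℤ) = -(τ:ℤ) := by omega
      exact_mod_cast congrArg (fun z : ℤ => (z:ℚ)) this
    have h3τaux : ∀ h2 : 2 ≤ τ, 3*τ ≤ τ^2+2 := by
      intro h2
      zify
      nlinarith [sq_nonneg ((τ:ℤ)-2), (by exact_mod_cast h2 : (2:ℤ) ≤ (τ:ℤ))]
    rcases Nat.lt_or_ge τ 2 with h2 | h2
    · -- τ = 1
      have hτe : τ = 1 := by omega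
      refine ⟨loopBr N 1 2 (6*M^2+22) (by omega) (by omega) (by omega) (by omega)
        (by omega) (by omega) (by omega), ?_, ?_⟩
      · rw [loopBr_turning, htτ, hτe]; try norm_num
      · apply loopBr_area
        push_cast [hNdef]
        ring
    · -- τ ≥ 2
      have h3τ := h3τaux h2
      have hcast1 : ((12*M^2+46+6*τ - 3*τ^2 : ℕ) : ℚ)
          = 12*((M^2:ℕ):ℚ)+46+6*(τ:ℚ) - 3*((τ^2:ℕ):ℚ) := by
        have h : 3*τ^2 ≤ 12*M^2+46+6*τ := by omega
        push_cast [Nat.cast_sub h]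
        ring
      have hcast2 : ((6*M^2+26 - 3*τ : ℕ) : ℚ) = 6*((M^2:ℕ):ℚ)+26-3*(τ:ℚ) := by
        have h : 3*τ ≤ 6*M^2+26 := by omega
        push_cast [Nat.cast_sub h]
        ring
      refine ⟨loopBr N τ (12*M^2+46+6*τ - 3*τ^2) (6*M^2+26 - 3*τ) (by omega) (by omega)
        (by omega) (by omega) (by omega) (by omega) (by omega), ?_, ?_⟩
      · rw [loopBr_turning, htτ]
      · apply loopBr_area
        rw [hcast1, hcast2]
        have hτ2 : ((τ^2:ℕ):ℚ) = (τ:ℚ)^2 := by push_cast; ring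
        have hM2 : ((M^2:ℕ):ℚ) = (M:ℚ)^2 := by push_cast; ring
        have hNQ : ((N:ℕ):ℚ) = 12*(M:ℚ)^2+49 := by
          rw [hNdef]; push_cast; ring
        rw [hτ2, hM2, hNQ]
        ring
  · -- zero
    refine ⟨loopA N (by omega) (6*((M^2:ℕ):ℤ)+24) (by omega) (by omega), ?_, ?_⟩
    · rw [loopA_turning, htz]; norm_num
    · apply loopA_area
      omega
  · -- positive
    set τ : ℕ := t.natAbs with hτ
    have hτ1 : 1 ≤ τ := by omega
    have hτM : τ ≤ M := ht
    have hsq : τ^2 ≤ M^2 := Nat.pow_le_pow_left hτM 2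
    have hMM : M ≤ M^2 := Nat.le_self_pow (by norm_num) M
    have hττ : τ ≤ τ^2 := Nat.le_self_pow (by norm_num) τ
    have htτ : (t:ℚ) = (τ:ℚ) := by
      have : (t:ℤ) = (τ:ℤ) := by omega
      exact_mod_cast congrArg (fun z : ℤ => (z:ℚ)) this
    have h3τaux : ∀ h2 : 2 ≤ τ, 3*τ ≤ τ^2+2 := by
      intro h2
      zify
      nlinarith [sq_nonneg ((τ:ℤ)-2), (by exact_mod_cast h2 : (2:ℤ) ≤ (τ:ℤ))]
    rcases Nat.lt_or_ge τ 2 with h2 | h2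
    · have hτe : τ = 1 := by omega
      refine ⟨loopB N 1 2 (6*M^2+22) (by omega) (by omega) (by omega) (by omega)
        (by omega) (by omega) (by omega), ?_, ?_⟩
      · rw [loopB_turning, htτ, hτe]; try norm_num
      · apply loopB_area_zero
        push_cast [hNdef]
        ring
    · have h3τ := h3τaux h2
      have hcast1 : ((12*M^2+46+6*τ - 3*τ^2 : ℕ) : ℚ)
          = 12*((M^2:ℕ):ℚ)+46+6*(τ:ℚ) - 3*((τ^2:ℕ):ℚ) := by
        have h : 3*τ^2 ≤ 12*M^2+46+6*τ := by omega
        push_cast [Nat.cast_sub h]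
        ring
      have hcast2 : ((6*M^2+26 - 3*τ : ℕ) : ℚ) = 6*((M^2:ℕ):ℚ)+26-3*(τ:ℚ) := by
        have h : 3*τ ≤ 6*M^2+26 := by omega
        push_cast [Nat.cast_sub h]
        ring
      refine ⟨loopB N τ (12*M^2+46+6*τ - 3*τ^2) (6*M^2+26 - 3*τ) (by omega) (by omega)
        (by omega) (by omega) (by omega) (by omega) (by omega), ?_, ?_⟩
      · rw [loopB_turning, htτ]
      · apply loopB_area_zero
        rw [hcast1, hcast2]
        have hτ2 : ((τ^2:ℕ):ℚ) = (τ:ℚ)^2 := by push_cast; ring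
        have hM2 : ((M^2:ℕ):ℚ) = (M:ℚ)^2 := by push_cast; ring
        have hNQ : ((N:ℕ):ℚ) = 12*(M:ℚ)^2+49 := by
          rw [hNdef]; push_cast; ring
        rw [hτ2, hM2, hNQ]
        ring

end TNaux

/-- For any pair of integers `(m, k)` (and any `M > 0`), there exist axis-parallel
polygonal grid loops `G₁, G₂` of a common grid size `n` with turning numbers `m` and `k`
respectively, each satisfying the zero signed-area condition `Σᵢ σᵢ·yᵢ·ℓᵢ = 0`. -/
theorem turning_numbers_realized
    (m k : ℤ) (M : ℝ) (hM : 0 < M) :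
    ∃ (n : ℕ) (G₁ G₂ : GridLoop n),
      turningNumber G₁ = (m : ℚ) ∧ turningNumber G₂ = (k : ℚ) ∧
      signedArea G₁ = 0 ∧ signedArea G₂ = 0 := by
  obtain ⟨G₁, h1, h2⟩ := TNaux.exists_loop (max m.natAbs k.natAbs) m (le_max_left _ _)
  obtain ⟨G₂, h3, h4⟩ := TNaux.exists_loop (max m.natAbs k.natAbs) k (le_max_right _ _)
  exact ⟨_, G₁, G₂, h1, h3, h2, h4⟩
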